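/- The 3ℤ-periodic Leibniz algebra L₇ defined by e_{3k}e_{3m+1} = e_{3(k+m)+1}, e_{3k+1}e_{3m} = −e_{3(k+m)+1}, e_{3k}e_{3m+2} = −e_{3(k+m)+2}, e_{3k+2}e_{3m} = e_{3(k+m)+2}, e_{3k+1}e_{3m+2} = e_{3(k+m+1)}, e_{3k+2}e_{3m+1} = −e_{3(k+m+1)} (all other products zero) satisfies L₇² = L₇; consequently L₇ is not solvable. -/

import Mathlib

open Finsupp

/-- Multiplication with structure constants `c`: `e_a e_b = c(a,b) e_{a+b}`. -/
noncomputable def mulZ {K : Type*} [Field K] (c : ℤ → ℤ → K) (x y : ℤ →₀ K) : ℤ →₀ K :=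
  x.sum fun a xa => y.sum fun b yb => Finsupp.single (a + b) (xa * yb * c a b)

/-- Structure constants of the `3ℤ`-periodic Leibniz algebra `L₇`. -/
def c7 (K : Type*) [Field K] : ℤ → ℤ → K := fun a b =>
  if a % 3 = 0 ∧ b % 3 = 1 then 1
  else if a % 3 = 1 ∧ b % 3 = 0 then -1
  else if a % 3 = 0 ∧ b % 3 = 2 then -1
  else if a % 3 = 2 ∧ b % 3 = 0 then 1
  else if a % 3 = 1 ∧ b % 3 = 2 then 1
  else if a % 3 = 2 ∧ b % 3 = 1 then -1
  else 0

/-- Derived series: `L^[0] = L`, `L^[k+1] = span of products of elements of L^[k]`. -/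
noncomputable def derZ {K : Type*} [Field K] (c : ℤ → ℤ → K) :
    ℕ → Submodule K (ℤ →₀ K)
  | 0 => ⊤
  | k + 1 =>
    Submodule.span K
      {z : ℤ →₀ K | ∃ x ∈ derZ c k, ∃ y ∈ derZ c k, z = mulZ c x y}

lemma mulZ_single {K : Type*} [Field K] (c : ℤ → ℤ → K) (a b : ℤ) (x y : K) :
    mulZ c (Finsupp.single a x) (Finsupp.single b y)
      = Finsupp.single (a + b) (x * y * c a b) := by
  unfold mulZ
  rw [Finsupp.sum_single_index, Finsupp.sum_single_index]
  · simp
  · simp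

lemma single_mem_der1 {K : Type*} [Field K] (a b : ℤ) (h : c7 K a b ≠ 0) :
    Finsupp.single (a + b) (1 : K) ∈ derZ (c7 K) 1 := by
  have hm : mulZ (c7 K) (Finsupp.single a (1 : K)) (Finsupp.single b 1) ∈ derZ (c7 K) 1 :=
    Submodule.subset_span ⟨_, by simp [derZ], _, by simp [derZ], rfl⟩
  have h2 := Submodule.smul_mem _ (c7 K a b)⁻¹ hm
  rw [mulZ_single, Finsupp.smul_single, one_mul, one_mul, smul_eq_mul,
    inv_mul_cancel₀ h] at h2
  exact h2

lemma single_mem_der1' {K : Type*} [Field K] (n : ℤ) :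
    Finsupp.single n (1 : K) ∈ derZ (c7 K) 1 := by
  have h : n % 3 = 0 ∨ n % 3 = 1 ∨ n % 3 = 2 := by omega
  rcases h with h | h | h
  · have h1 : (n - 1) % 3 = 2 := by omega
    have := single_mem_der1 (K := K) 1 (n - 1) (by norm_num [c7, h1])
    simpa using this
  · have := single_mem_der1 (K := K) 0 n (by norm_num [c7, h])
    simpa using this
  · have h2 : n % 3 ≠ 1 := by omega
    have := single_mem_der1 (K := K) 0 n (by norm_num [c7, h, h2])
    simpa using this

lemma der1_top {K : Type*} [Field K] : derZ (c7 K) 1 = ⊤ := by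
  rw [eq_top_iff]
  intro x _
  induction x using Finsupp.induction with
  | zero => exact Submodule.zero_mem _
  | single_add a b f _ _ ih =>
    refine Submodule.add_mem _ ?_ (ih trivial)
    have := Submodule.smul_mem _ b (single_mem_der1' (K := K) a)
    rwa [Finsupp.smul_single, smul_eq_mul, mul_one] at this

/-- `L₇² = L₇`, hence `L₇` is not solvable. -/
theorem stmt18 {K : Type*} [Field K] [CharZero K] :
    derZ (c7 K) 1 = ⊤ ∧ ∀ m : ℕ, derZ (c7 K) m ≠ ⊥ := by
  have htop : ∀ m : ℕ, derZ (c7 K) m = ⊤ := by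
    intro m
    induction m with
    | zero => rfl
    | succ k ih =>
      have : derZ (c7 K) (k + 1) = derZ (c7 K) 1 := by
        simp only [derZ, ih]
      rw [this, der1_top]
  refine ⟨der1_top, fun m => ?_⟩
  rw [htop m]
  exact top_ne_bot
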